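/- Let G be an unmixed bipartite graph on V_n = {x_1,...,x_n} ∪ {y_1,...,y_n} with an induced K_{m,m} (m ≥ 2) on V_m = {x_1,...,x_m} ∪ {y_1,...,y_m}, and let H be the induced subgraph on {x_m,...,x_n} ∪ {y_m,...,y_n}. Then G and H have the same number of minimal vertex covers. -/

import Mathlib

def IsCover (n : ℕ) (E : Fin n → Fin n → Prop) (C : Set (Fin n ⊕ Fin n)) : Prop :=
  ∀ i j, E i j → Sum.inl i ∈ C ∨ Sum.inr j ∈ C

def IsMinCover (n : ℕ) (E : Fin n → Fin n → Prop) (C : Set (Fin n ⊕ Fin n)) : Prop :=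
  IsCover n E C ∧ ∀ D ⊂ C, ¬ IsCover n E D

theorem stmt18 (n m : ℕ) (hm : 2 ≤ m) (hn : m ≤ n) (E : Fin n → Fin n → Prop)
    (hrefl : ∀ i, E i i)
    (htrans : ∀ a b c : Fin n, a ≠ b → b ≠ c → a ≠ c → E a b → E b c → E a c)
    (hone : ∀ C, IsMinCover n E C → ∀ k, (Sum.inl k ∈ C ↔ Sum.inr k ∉ C))
    (hcard : ∀ C, IsMinCover n E C → C.ncard = n)
    (hK : ∀ i j : Fin n, i.val < m → j.val < m → E i j) :
    {C | IsMinCover n (fun i j => E i j ∧ m - 1 ≤ i.val ∧ m - 1 ≤ j.val) C ∧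
        ∀ v ∈ C, m - 1 ≤ Sum.elim Fin.val Fin.val v}.ncard =
      {C | IsMinCover n E C}.ncard := by
  classical
  have hM1 : m - 1 < n := by omega
  set M : Fin n := ⟨m - 1, hM1⟩ with hMdef
  have hMval : M.val = m - 1 := rfl
  set E' : Fin n → Fin n → Prop := fun i j => E i j ∧ m - 1 ≤ i.val ∧ m - 1 ≤ j.val with hE'def
  have hE'MM : E' M M := ⟨hrefl M, le_of_eq hMval.symm, le_of_eq hMval.symm⟩
  set X : Set (Fin n ⊕ Fin n) := {v | ∃ k : Fin n, v = Sum.inl k ∧ k.val < m - 1} with hXdef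
  set Y : Set (Fin n ⊕ Fin n) := {v | ∃ k : Fin n, v = Sum.inr k ∧ k.val < m - 1} with hYdef
  -- membership helpers
  have hXmem : ∀ k : Fin n, k.val < m - 1 → Sum.inl k ∈ X := fun k hk => ⟨k, rfl, hk⟩
  have hYmem : ∀ k : Fin n, k.val < m - 1 → Sum.inr k ∈ Y := fun k hk => ⟨k, rfl, hk⟩
  have hXlow : ∀ v ∈ X, Sum.elim Fin.val Fin.val v < m - 1 := by
    rintro v ⟨k, rfl, hk⟩; simpa using hk
  have hYlow : ∀ v ∈ Y, Sum.elim Fin.val Fin.val v < m - 1 := by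
    rintro v ⟨k, rfl, hk⟩; simpa using hk
  have hXinl : ∀ k : Fin n, Sum.inr k ∉ X := by rintro k ⟨k', h, -⟩; cases h
  have hYinr : ∀ k : Fin n, Sum.inl k ∉ Y := by rintro k ⟨k', h, -⟩; cases h
  have hXinl' : ∀ k : Fin n, Sum.inl k ∈ X → k.val < m - 1 := by
    rintro k ⟨k', h, hk⟩; cases h; exact hk
  have hYinr' : ∀ k : Fin n, Sum.inr k ∈ Y → k.val < m - 1 := by
    rintro k ⟨k', h, hk⟩; cases h; exact hk
  -- pull lemmas
  have pullL : ∀ D : Set (Fin n ⊕ Fin n), IsCover n E' D → Sum.inl M ∈ D → Sum.inr M ∉ D →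
      ∀ i j : Fin n, m - 1 ≤ i.val → j.val < m - 1 → E i j → Sum.inl i ∈ D := by
    intro D hcov hMl hMr i j hi hj hij
    by_cases hiM : i = M
    · exact hiM ▸ hMl
    · have hjM : E j M := hK j M (by omega) (by omega)
      have hiM' : E i M := htrans i j M (Fin.ne_of_val_ne (by omega))
        (Fin.ne_of_val_ne (by rw [hMval]; omega)) hiM hij hjM
      rcases hcov i M ⟨hiM', hi, le_of_eq hMval.symm⟩ with h | h
      · exact h
      · exact absurd h hMr
  have pullR : ∀ D : Set (Fin n ⊕ Fin n), IsCover n E' D → Sum.inr M ∈ D → Sum.inl M ∉ D →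
      ∀ i j : Fin n, i.val < m - 1 → m - 1 ≤ j.val → E i j → Sum.inr j ∈ D := by
    intro D hcov hMr hMl i j hi hj hij
    by_cases hjM : j = M
    · exact hjM ▸ hMr
    · have hMi : E M i := hK M i (by omega) (by omega)
      have hMj : E M j := htrans M i j (Fin.ne_of_val_ne (by rw [hMval]; omega))
        (Fin.ne_of_val_ne (by omega)) (fun h => hjM h.symm) hMi hij
      rcases hcov M j ⟨hMj, le_of_eq hMval.symm, hj⟩ with h | h
      · exact absurd h hMl
      · exact h
  -- a minimal E'-cover cannot contain both inl M and inr M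
  have notboth : ∀ C : Set (Fin n ⊕ Fin n), IsMinCover n E' C →
      ¬ (Sum.inl M ∈ C ∧ Sum.inr M ∈ C) := by
    rintro C ⟨hcov, hmin⟩ ⟨hMl, hMr⟩
    -- remove inl M
    have h1 : ¬ IsCover n E' (C \ {Sum.inl M}) :=
      hmin _ (Set.sdiff_singleton_ssubset.mpr hMl)
    simp only [IsCover, not_forall] at h1
    obtain ⟨i, j, hij, huncov⟩ := h1
    push_neg at huncov
    obtain ⟨hil, hjr⟩ := huncov
    have hjC : Sum.inr j ∉ C := fun h => hjr ⟨h, by simp⟩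
    have hiM : i = M := by
      rcases hcov i j hij with h | h
      · by_contra hne
        exact hil ⟨h, by simp [Sum.inl.injEq]; exact fun e => hne e⟩
      · exact absurd h hjC
    have hjM : j ≠ M := fun h => hjC (h ▸ hMr)
    -- remove inr M
    have h2 : ¬ IsCover n E' (C \ {Sum.inr M}) :=
      hmin _ (Set.sdiff_singleton_ssubset.mpr hMr)
    simp only [IsCover, not_forall] at h2
    obtain ⟨i', j', hij', huncov'⟩ := h2
    push_neg at huncov'
    obtain ⟨hil', hjr'⟩ := huncov'
    have hiC' : Sum.inl i' ∉ C := fun h => hil' ⟨h, by simp⟩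
    have hjM' : j' = M := by
      rcases hcov i' j' hij' with h | h
      · exact absurd h hiC'
      · by_contra hne
        exact hjr' ⟨h, by simp [Sum.inr.injEq]; exact fun e => hne e⟩
    have hiM' : i' ≠ M := fun h => hiC' (h ▸ hMl)
    -- now combine
    subst hiM; subst hjM'
    by_cases hij'' : i' = j
    · subst hij''
      rcases hcov i' i' ⟨hrefl i', hij'.2.1, hij'.2.1⟩ with h | h
      · exact hiC' h
      · exact hjC h
    · have : E i' j := htrans i' M j hiM' (fun h => hjM h.symm) hij'' hij'.1 hij.1
      rcases hcov i' j ⟨this, hij'.2.1, hij.2.2⟩ with h | h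
      · exact hiC' h
      · exact hjC h
  -- forward: C ∪ X is a minimal E-cover
  have fwdL : ∀ C : Set (Fin n ⊕ Fin n), IsMinCover n E' C →
      (∀ v ∈ C, m - 1 ≤ Sum.elim Fin.val Fin.val v) →
      Sum.inl M ∈ C → Sum.inr M ∉ C → IsMinCover n E (C ∪ X) := by
    rintro C ⟨hcov, hmin⟩ hsupp hMl hMr
    constructor
    · intro i j hij
      by_cases hi : i.val < m - 1
      · exact Or.inl (Or.inr (hXmem i hi))
      · push_neg at hi
        by_cases hj : j.val < m - 1
        · exact Or.inl (Or.inl (pullL C hcov hMl hMr i j hi hj hij))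
        · push_neg at hj
          rcases hcov i j ⟨hij, hi, hj⟩ with h | h
          · exact Or.inl (Or.inl h)
          · exact Or.inr (Or.inl h)
    · intro D hD hDcov
      obtain ⟨v, hvCX, hvD⟩ := Set.exists_of_ssubset hD
      rcases hvCX with hvC | hvX
      · -- v ∈ C : use minimality of C
        have h1 : ¬ IsCover n E' (C \ {v}) :=
          hmin _ (Set.sdiff_singleton_ssubset.mpr hvC)
        simp only [IsCover, not_forall] at h1
        obtain ⟨i, j, hij, huncov⟩ := h1
        push_neg at huncov
        obtain ⟨hil, hjr⟩ := huncov
        rcases hDcov i j hij.1 with h | h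
        · have h' : Sum.inl i ∈ C ∪ X := hD.1 h
          rcases h' with h' | h'
          · have : Sum.inl i = v := by
              by_contra hne
              exact hil ⟨h', by simpa using hne⟩
            exact hvD (this ▸ h)
          · exact absurd (hXinl' i h') (not_lt.mpr hij.2.1)
        · have h' : Sum.inr j ∈ C ∪ X := hD.1 h
          rcases h' with h' | h'
          · have : Sum.inr j = v := by
              by_contra hne
              exact hjr ⟨h', by simpa using hne⟩
            exact hvD (this ▸ h)
          · exact hXinl j h'
      · -- v ∈ X : v = inl k, edge (k, M) uncovered
        obtain ⟨k, rfl, hk⟩ := hvX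
        have hkM : E k M := hK k M (by omega) (by omega)
        rcases hDcov k M hkM with h | h
        · exact hvD h
        · rcases hD.1 h with h' | h'
          · exact hMr h'
          · exact hXinl M h'
  have fwdR : ∀ C : Set (Fin n ⊕ Fin n), IsMinCover n E' C →
      (∀ v ∈ C, m - 1 ≤ Sum.elim Fin.val Fin.val v) →
      Sum.inr M ∈ C → Sum.inl M ∉ C → IsMinCover n E (C ∪ Y) := by
    rintro C ⟨hcov, hmin⟩ hsupp hMr hMl
    constructor
    · intro i j hij
      by_cases hj : j.val < m - 1
      · exact Or.inr (Or.inr (hYmem j hj))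
      · push_neg at hj
        by_cases hi : i.val < m - 1
        · exact Or.inr (Or.inl (pullR C hcov hMr hMl i j hi hj hij))
        · push_neg at hi
          rcases hcov i j ⟨hij, hi, hj⟩ with h | h
          · exact Or.inl (Or.inl h)
          · exact Or.inr (Or.inl h)
    · intro D hD hDcov
      obtain ⟨v, hvCY, hvD⟩ := Set.exists_of_ssubset hD
      rcases hvCY with hvC | hvY
      · have h1 : ¬ IsCover n E' (C \ {v}) :=
          hmin _ (Set.sdiff_singleton_ssubset.mpr hvC)
        simp only [IsCover, not_forall] at h1
        obtain ⟨i, j, hij, huncov⟩ := h1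
        push_neg at huncov
        obtain ⟨hil, hjr⟩ := huncov
        rcases hDcov i j hij.1 with h | h
        · rcases hD.1 h with h' | h'
          · have : Sum.inl i = v := by
              by_contra hne
              exact hil ⟨h', by simpa using hne⟩
            exact hvD (this ▸ h)
          · exact hYinr i h'
        · rcases hD.1 h with h' | h'
          · have : Sum.inr j = v := by
              by_contra hne
              exact hjr ⟨h', by simpa using hne⟩
            exact hvD (this ▸ h)
          · exact absurd (hYinr' j h') (not_lt.mpr hij.2.2)
      · obtain ⟨k, rfl, hk⟩ := hvY
        have hMk : E M k := hK M k (by omega) (by omega)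
        rcases hDcov M k hMk with h | h
        · rcases hD.1 h with h' | h'
          · exact hMl h'
          · exact hYinr M h'
        · exact hvD h
  -- dichotomy for minimal E-covers
  have dich : ∀ D, IsMinCover n E D →
      (∀ k : Fin n, k.val < m → Sum.inl k ∈ D) ∨ (∀ k : Fin n, k.val < m → Sum.inr k ∈ D) := by
    intro D hD
    by_cases h : ∀ k : Fin n, k.val < m → Sum.inl k ∈ D
    · exact Or.inl h
    · push_neg at h
      obtain ⟨k, hk, hkD⟩ := h
      refine Or.inr fun l hl => ?_
      by_cases hlk : l = k
      · subst hlk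
        by_contra h'
        exact hkD ((hone D hD l).mpr h')
      · rcases hD.1 k l (hK k l hk hl) with h' | h'
        · exact absurd h' hkD
        · exact h'
  set top : Set (Fin n ⊕ Fin n) := {v | m - 1 ≤ Sum.elim Fin.val Fin.val v} with htopdef
  have htopl : ∀ k : Fin n, m - 1 ≤ k.val → Sum.inl k ∈ top := fun _ hk => hk
  have htopr : ∀ k : Fin n, m - 1 ≤ k.val → Sum.inr k ∈ top := fun _ hk => hk
  have hXtop : ∀ v ∈ X, v ∉ top := fun v hv ht => absurd (hXlow v hv) (not_lt.mpr ht)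
  have hYtop : ∀ v ∈ Y, v ∉ top := fun v hv ht => absurd (hYlow v hv) (not_lt.mpr ht)
  -- backward, inl branch
  have bwdL : ∀ D, IsMinCover n E D → (∀ k : Fin n, k.val < m → Sum.inl k ∈ D) →
      (IsMinCover n E' (D ∩ top) ∧ ∀ v ∈ D ∩ top, m - 1 ≤ Sum.elim Fin.val Fin.val v) ∧
        Sum.inl M ∈ D ∩ top ∧ D = (D ∩ top) ∪ X := by
    intro D hD hall
    have hDr : ∀ k : Fin n, k.val < m → Sum.inr k ∉ D :=
      fun k hk => (hone D hD k).mp (hall k hk)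
    have hMl : Sum.inl M ∈ D ∩ top :=
      ⟨hall M (by omega), htopl M (le_of_eq hMval.symm)⟩
    have hMr : Sum.inr M ∉ D ∩ top := fun h => hDr M (by omega) h.1
    have hXD : X ⊆ D := by
      rintro v ⟨k, rfl, hk⟩
      exact hall k (by omega)
    have hDeq : D = (D ∩ top) ∪ X := by
      apply Set.Subset.antisymm
      · intro v hv
        rcases v with k | k
        · by_cases hkv : k.val < m - 1
          · exact Or.inr (hXmem k hkv)
          · exact Or.inl ⟨hv, htopl k (by omega)⟩
        · by_cases hkv : k.val < m - 1
          · exact absurd hv (hDr k (by omega))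
          · exact Or.inl ⟨hv, htopr k (by omega)⟩
      · exact Set.union_subset Set.inter_subset_left hXD
    have hcov' : IsCover n E' (D ∩ top) := by
      intro i j hij
      rcases hD.1 i j hij.1 with h | h
      · exact Or.inl ⟨h, htopl i hij.2.1⟩
      · exact Or.inr ⟨h, htopr j hij.2.2⟩
    refine ⟨⟨⟨hcov', ?_⟩, fun v hv => hv.2⟩, hMl, hDeq⟩
    intro D' hsub hD'cov
    have hD'top : D' ⊆ top := fun v hv => (hsub.1 hv).2
    have hMr' : Sum.inr M ∉ D' := fun h => hMr (hsub.1 h)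
    have hMl' : Sum.inl M ∈ D' := by
      rcases hD'cov M M hE'MM with h | h
      · exact h
      · exact absurd h hMr'
    -- D' ∪ X is a proper subset of D and an E-cover: contradiction with minimality of D
    have hss : D' ∪ X ⊂ D := by
      constructor
      · exact Set.union_subset (fun v hv => (hsub.1 hv).1) hXD
      · intro hDsub
        obtain ⟨w, hwC, hwD'⟩ := Set.exists_of_ssubset hsub
        have hw : w ∈ D' ∪ X := hDsub hwC.1
        rcases hw with hw | hw
        · exact hwD' hw
        · exact hXtop w hw hwC.2
    refine hD.2 (D' ∪ X) hss ?_
    intro i j hij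
    by_cases hi : i.val < m - 1
    · exact Or.inl (Or.inr (hXmem i hi))
    · push_neg at hi
      by_cases hj : j.val < m - 1
      · exact Or.inl (Or.inl (pullL D' hD'cov hMl' hMr' i j hi hj hij))
      · push_neg at hj
        rcases hD'cov i j ⟨hij, hi, hj⟩ with h | h
        · exact Or.inl (Or.inl h)
        · exact Or.inr (Or.inl h)
  -- backward, inr branch
  have bwdR : ∀ D, IsMinCover n E D → (∀ k : Fin n, k.val < m → Sum.inr k ∈ D) →
      (IsMinCover n E' (D ∩ top) ∧ ∀ v ∈ D ∩ top, m - 1 ≤ Sum.elim Fin.val Fin.val v) ∧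
        (Sum.inr M ∈ D ∩ top ∧ Sum.inl M ∉ D ∩ top) ∧ D = (D ∩ top) ∪ Y := by
    intro D hD hall
    have hDl : ∀ k : Fin n, k.val < m → Sum.inl k ∉ D :=
      fun k hk h => (hone D hD k).mp h (hall k hk)
    have hMr : Sum.inr M ∈ D ∩ top :=
      ⟨hall M (by omega), htopl M (le_of_eq hMval.symm)⟩
    have hMl : Sum.inl M ∉ D ∩ top := fun h => hDl M (by omega) h.1
    have hYD : Y ⊆ D := by
      rintro v ⟨k, rfl, hk⟩
      exact hall k (by omega)
    have hDeq : D = (D ∩ top) ∪ Y := by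
      apply Set.Subset.antisymm
      · intro v hv
        rcases v with k | k
        · by_cases hkv : k.val < m - 1
          · exact absurd hv (hDl k (by omega))
          · exact Or.inl ⟨hv, htopl k (by omega)⟩
        · by_cases hkv : k.val < m - 1
          · exact Or.inr (hYmem k hkv)
          · exact Or.inl ⟨hv, htopr k (by omega)⟩
      · exact Set.union_subset Set.inter_subset_left hYD
    have hcov' : IsCover n E' (D ∩ top) := by
      intro i j hij
      rcases hD.1 i j hij.1 with h | h
      · exact Or.inl ⟨h, htopl i hij.2.1⟩
      · exact Or.inr ⟨h, htopr j hij.2.2⟩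
    refine ⟨⟨⟨hcov', ?_⟩, fun v hv => hv.2⟩, ⟨hMr, hMl⟩, hDeq⟩
    intro D' hsub hD'cov
    have hMl' : Sum.inl M ∉ D' := fun h => hMl (hsub.1 h)
    have hMr' : Sum.inr M ∈ D' := by
      rcases hD'cov M M hE'MM with h | h
      · exact absurd h hMl'
      · exact h
    have hss : D' ∪ Y ⊂ D := by
      constructor
      · exact Set.union_subset (fun v hv => (hsub.1 hv).1) hYD
      · intro hDsub
        obtain ⟨w, hwC, hwD'⟩ := Set.exists_of_ssubset hsub
        have hw : w ∈ D' ∪ Y := hDsub hwC.1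
        rcases hw with hw | hw
        · exact hwD' hw
        · exact hYtop w hw hwC.2
    refine hD.2 (D' ∪ Y) hss ?_
    intro i j hij
    by_cases hj : j.val < m - 1
    · exact Or.inr (Or.inr (hYmem j hj))
    · push_neg at hj
      by_cases hi : i.val < m - 1
      · exact Or.inr (Or.inl (pullR D' hD'cov hMr' hMl' i j hi hj hij))
      · push_neg at hi
        rcases hD'cov i j ⟨hij, hi, hj⟩ with h | h
        · exact Or.inl (Or.inl h)
        · exact Or.inr (Or.inl h)
  -- the bijection
  set f : Set (Fin n ⊕ Fin n) → Set (Fin n ⊕ Fin n) :=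
    fun C => if Sum.inl M ∈ C then C ∪ X else C ∪ Y with hfdef
  set S : Set (Set (Fin n ⊕ Fin n)) :=
    {C | IsMinCover n E' C ∧ ∀ v ∈ C, m - 1 ≤ Sum.elim Fin.val Fin.val v} with hSdef
  set T : Set (Set (Fin n ⊕ Fin n)) := {C | IsMinCover n E C} with hTdef
  have hrec : ∀ C : Set (Fin n ⊕ Fin n), (∀ v ∈ C, m - 1 ≤ Sum.elim Fin.val Fin.val v) →
      f C ∩ top = C := by
    intro C hsupp
    have hCtop : C ⊆ top := fun v hv => hsupp v hv
    by_cases hb : Sum.inl M ∈ C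
    · rw [hfdef]; simp only [if_pos hb]
      ext v
      constructor
      · rintro ⟨hv1 | hv1, hv2⟩
        · exact hv1
        · exact absurd hv2 (hXtop v hv1)
      · exact fun hv => ⟨Or.inl hv, hCtop hv⟩
    · rw [hfdef]; simp only [if_neg hb]
      ext v
      constructor
      · rintro ⟨hv1 | hv1, hv2⟩
        · exact hv1
        · exact absurd hv2 (hYtop v hv1)
      · exact fun hv => ⟨Or.inl hv, hCtop hv⟩
  have hinj : Set.InjOn f S := by
    intro C1 h1 C2 h2 hf
    rw [← hrec C1 h1.2, ← hrec C2 h2.2, hf]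
  have himg : f '' S = T := by
    apply Set.Subset.antisymm
    · rintro _ ⟨C, ⟨hC, hsupp⟩, rfl⟩
      rcases hC.1 M M hE'MM with hMl | hMr
      · have hMr : Sum.inr M ∉ C := fun h => notboth C hC ⟨hMl, h⟩
        show IsMinCover n E (f C)
        rw [hfdef]; simp only [if_pos hMl]
        exact fwdL C hC hsupp hMl hMr
      · by_cases hMl : Sum.inl M ∈ C
        · exact absurd ⟨hMl, hMr⟩ (notboth C hC)
        · show IsMinCover n E (f C)
          rw [hfdef]; simp only [if_neg hMl]
          exact fwdR C hC hsupp hMr hMl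
    · intro D hD
      rcases dich D hD with hall | hall
      · obtain ⟨hCS, hMl, hDeq⟩ := bwdL D hD hall
        refine ⟨D ∩ top, hCS, ?_⟩
        rw [hfdef]; simp only [if_pos hMl]
        exact hDeq.symm
      · obtain ⟨hCS, ⟨hMr, hMl⟩, hDeq⟩ := bwdR D hD hall
        refine ⟨D ∩ top, hCS, ?_⟩
        rw [hfdef]; simp only [if_neg hMl]
        exact hDeq.symm
  calc S.ncard = (f '' S).ncard := (Set.ncard_image_of_injOn hinj).symm
    _ = T.ncard := by rw [himg]
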